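/- Let X be a symmetric n×n matrix of variables. For any index i and j ≠ i, the monomial operator ∂²/(∂x_{ii}∂x_{ij}) annihilates perm(X). -/
import Mathlib


open MvPolynomial

/-- The permanent of the generic symmetric `n × n` matrix. -/
noncomputable def symPerm (K : Type*) [Field K] (n : ℕ) : MvPolynomial (Sym2 (Fin n)) K :=
  ∑ σ : Equiv.Perm (Fin n), ∏ i : Fin n, X s(i, σ i)

/-- For the permanent of the generic symmetric `n × n` matrix, the monomial operator
`∂²/(∂x_{ii}∂x_{ij})` (with `j ≠ i`) annihilates `perm X`. -/
theorem monomial_annihilates_perm {K : Type*} [Field K] [CharZero K]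
    (n : ℕ) (i j : Fin n) (hij : j ≠ i) :
    pderiv s(i, i) (pderiv s(i, j) (symPerm K n)) = 0 := by
  unfold symPerm
  rw [map_sum, map_sum]
  refine Finset.sum_eq_zero fun σ _ => ?_
  -- rewrite the product as a single monomial
  have hterm : (∏ k : Fin n, (X s(k, σ k) : MvPolynomial (Sym2 (Fin n)) K)) =
      monomial (∑ k : Fin n, Finsupp.single s(k, σ k) 1) 1 := by
    rw [monomial_sum_one]
    exact Finset.prod_congr rfl fun k _ => by rw [X]
  rw [hterm]
  set d : Sym2 (Fin n) →₀ ℕ := ∑ k : Fin n, Finsupp.single s(k, σ k) 1 with hd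
  have hne : s(i, i) ≠ s(i, j) := by
    simp [Sym2.eq_iff]
    exact fun h => (hij h.symm).elim
  rw [pderiv_monomial, pderiv_monomial]
  have hsub : ((d - Finsupp.single s(i, j) 1 : Sym2 (Fin n) →₀ ℕ)) s(i, i) = d s(i, i) := by
    rw [Finsupp.tsub_apply, Finsupp.single_apply, if_neg (fun h => hne h.symm), tsub_zero]
  rw [hsub]
  have hdapp : ∀ e : Sym2 (Fin n), d e = ∑ k : Fin n, if s(k, σ k) = e then 1 else 0 := by
    intro e
    rw [hd, Finsupp.finset_sum_apply]
    exact Finset.sum_congr rfl fun k _ => Finsupp.single_apply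
  have hzero : d s(i, j) * d s(i, i) = 0 := by
    rcases Nat.eq_zero_or_pos (d s(i, i)) with h | h
    · rw [h, mul_zero]
    · -- d s(i,i) > 0 means σ i = i
      have : ∃ k : Fin n, s(k, σ k) = s(i, i) := by
        by_contra hc
        push_neg at hc
        rw [hdapp] at h
        have : (∑ k : Fin n, if s(k, σ k) = s(i, i) then 1 else 0) = 0 :=
          Finset.sum_eq_zero fun k _ => if_neg (hc k)
        omega
      obtain ⟨k, hk⟩ := this
      rw [Sym2.eq_iff] at hk
      have hσi : σ i = i := by
        rcases hk with ⟨h1, h2⟩ | ⟨h1, h2⟩ <;> subst h1 <;> exact h2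
      have : d s(i, j) = 0 := by
        rw [hdapp]
        refine Finset.sum_eq_zero fun k _ => if_neg ?_
        rw [Sym2.eq_iff]
        rintro (⟨h1, h2⟩ | ⟨h1, h2⟩)
        · exact hij (by rw [← hσi, ← h2, h1])
        · exact hij (σ.injective (by rw [hσi, ← h2, h1]))
      rw [this, zero_mul]
    -- conclude the coefficient is zero
  have hK : ((d s(i, j) : K)) * ((d s(i, i) : K)) = 0 := by
    rw [← Nat.cast_mul, hzero, Nat.cast_zero]
  rw [one_mul, hK, monomial_zero]
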